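/- Let E be a locally solid vector lattice. If T and S are no-bounded linear operators on E, then the composition T ∘ S is no-bounded; that is, there exists a neighborhood of 0 whose image under T ∘ S is order bounded. -/

import Mathlib

open Filter Topology Pointwise

/-- In a locally solid vector lattice `E`, the composition of two no-bounded
linear operators is no-bounded. -/
theorem noBounded_comp
    {E : Type*} [AddCommGroup E] [Lattice E] [Module ℝ E]
    [CovariantClass E E (· + ·) (· ≤ ·)] [PosSMulMono ℝ E]
    [TopologicalSpace E] [IsTopologicalAddGroup E] [ContinuousSMul ℝ E]
    (hsolid : ∀ W ∈ 𝓝 (0 : E), ∃ W' ∈ 𝓝 (0 : E), W' ⊆ W ∧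
      ∀ x y : E, y ∈ W' → |x| ≤ |y| → x ∈ W')
    (T S : E →ₗ[ℝ] E)
    (hT : ∃ U ∈ 𝓝 (0 : E), ∃ a : E, 0 ≤ a ∧ T '' U ⊆ Set.Icc (-a) a)
    (hS : ∃ U ∈ 𝓝 (0 : E), ∃ a : E, 0 ≤ a ∧ S '' U ⊆ Set.Icc (-a) a) :
    ∃ U ∈ 𝓝 (0 : E), ∃ a : E, 0 ≤ a ∧ (T ∘ₗ S) '' U ⊆ Set.Icc (-a) a := by
  obtain ⟨V, hV, a, ha, hTa⟩ := hT
  obtain ⟨U, hU, b, hb, hSb⟩ := hS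
  obtain ⟨V', hV', hV'V, hV'solid⟩ := hsolid V hV
  -- find t > 0 with t • b ∈ V'
  have htend : Filter.Tendsto (fun t : ℝ => t • b) (𝓝 0) (𝓝 (0 : E)) := by
    have : Continuous (fun t : ℝ => t • b) := continuous_id.smul continuous_const
    simpa using this.tendsto 0
  have hpre : {t : ℝ | t • b ∈ V'} ∈ 𝓝 (0 : ℝ) := htend hV'
  obtain ⟨ε, hε, hball⟩ := Metric.mem_nhds_iff.mp hpre
  set t : ℝ := ε / 2 with ht
  have htpos : 0 < t := half_pos hε
  have htb : t • b ∈ V' := by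
    apply hball
    simp [Real.ball_eq_Ioo]
    constructor <;> [linarith [abs_of_pos htpos ▸ htpos]; skip]
    · simpa [ht, abs_of_pos htpos] using half_lt_self hε
  refine ⟨U, hU, t⁻¹ • a, smul_nonneg (by positivity) ha, ?_⟩
  rintro _ ⟨x, hx, rfl⟩
  have hSx : S x ∈ Set.Icc (-b) b := hSb ⟨x, hx, rfl⟩
  have habs : |S x| ≤ b := abs_le'.mpr ⟨hSx.2, neg_le.mpr hSx.1⟩
  have h1 : |t • S x| ≤ |t • b| := by
    rw [abs_of_nonneg (smul_nonneg htpos.le hb)]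
    refine abs_le'.mpr ⟨?_, ?_⟩
    · exact smul_le_smul_of_nonneg_left ((le_abs_self _).trans habs) htpos.le
    · rw [← smul_neg]
      exact smul_le_smul_of_nonneg_left ((neg_le_abs _).trans habs) htpos.le
  have hmem : t • S x ∈ V' := hV'solid _ _ htb h1
  have hT2 : T (t • S x) ∈ Set.Icc (-a) a := hTa ⟨_, hV'V hmem, rfl⟩
  rw [map_smul] at hT2
  have e : T (S x) = t⁻¹ • (t • T (S x)) := by
    rw [smul_smul, inv_mul_cancel₀ htpos.ne', one_smul]
  constructor
  · have := smul_le_smul_of_nonneg_left hT2.1 (inv_nonneg.mpr htpos.le)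
    rw [smul_neg] at this
    simpa [LinearMap.comp_apply, ← e] using this
  · have := smul_le_smul_of_nonneg_left hT2.2 (inv_nonneg.mpr htpos.le)
    simpa [LinearMap.comp_apply, ← e] using this
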